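/- Let X be a locally compact abelian group, α a topological automorphism of X, and ξ₁, ξ₂ independent X-valued random variables. If the conditional distribution of L₂ = ξ₁ + αξ₂ given L₁ = ξ₁ + ξ₂ is symmetric, then the linear forms M₁ = (I+α)ξ₁ + 2αξ₂ and M₂ = 2ξ₁ + (I+α)ξ₂ are independent. -/

import Mathlib

open MeasureTheory

/-- If the conditional distribution of `L₂ = ξ₁ + αξ₂` given `L₁ = ξ₁ + ξ₂` is symmetric,
then the linear forms `M₁ = (I+α)ξ₁ + 2αξ₂` and `M₂ = 2ξ₁ + (I+α)ξ₂` are independent. -/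
theorem stmt14 {X : Type*} [TopologicalSpace X] [AddCommGroup X] [IsTopologicalAddGroup X]
    [LocallyCompactSpace X] [SecondCountableTopology X]
    [MeasurableSpace X] [BorelSpace X]
    {Ω : Type*} [MeasurableSpace Ω] (μ : Measure Ω) [IsProbabilityMeasure μ]
    (ξ₁ ξ₂ : Ω → X) (hξ₁ : Measurable ξ₁) (hξ₂ : Measurable ξ₂)
    (hindep : ProbabilityTheory.IndepFun ξ₁ ξ₂ μ)
    (α : X ≃+ X) (hα : Continuous α) (hα' : Continuous α.symm)
    (hsym : μ.map (fun ω => (ξ₁ ω + ξ₂ ω, ξ₁ ω + α (ξ₂ ω)))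
        = μ.map (fun ω => (ξ₁ ω + ξ₂ ω, -(ξ₁ ω + α (ξ₂ ω))))) :
    ProbabilityTheory.IndepFun
      (fun ω => (ξ₁ ω + α (ξ₁ ω)) + 2 • α (ξ₂ ω))
      (fun ω => 2 • ξ₁ ω + (ξ₂ ω + α (ξ₂ ω))) μ := by
  have hαm : Measurable (α : X → X) := hα.measurable
  set M₁ : Ω → X := fun ω => (ξ₁ ω + α (ξ₁ ω)) + 2 • α (ξ₂ ω) with hM₁def
  set M₂ : Ω → X := fun ω => 2 • ξ₁ ω + (ξ₂ ω + α (ξ₂ ω)) with hM₂def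
  have hM₁ : Measurable M₁ := (hξ₁.add (hαm.comp hξ₁)).add ((hαm.comp hξ₂).const_smul 2)
  have hM₂ : Measurable M₂ := (hξ₁.const_smul 2).add (hξ₂.add (hαm.comp hξ₂))
  set N₁ : Ω → X := fun ω => α (ξ₁ ω) - ξ₁ ω with hN₁def
  set N₂ : Ω → X := fun ω => ξ₂ ω - α (ξ₂ ω) with hN₂def
  have hN₁ : Measurable N₁ := (hαm.comp hξ₁).sub hξ₁
  have hN₂ : Measurable N₂ := hξ₂.sub (hαm.comp hξ₂)
  set F : X × X → X × X := fun p => (α p.1 + p.2, p.1 + p.2) with hFdef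
  have hFm : Measurable F :=
    ((hαm.comp measurable_fst).add measurable_snd).prodMk (measurable_fst.add measurable_snd)
  have hL : Measurable (fun ω => (ξ₁ ω + ξ₂ ω, ξ₁ ω + α (ξ₂ ω))) :=
    (hξ₁.add hξ₂).prodMk (hξ₁.add (hαm.comp hξ₂))
  have hL' : Measurable (fun ω => (ξ₁ ω + ξ₂ ω, -(ξ₁ ω + α (ξ₂ ω)))) :=
    (hξ₁.add hξ₂).prodMk (hξ₁.add (hαm.comp hξ₂)).neg
  -- push the symmetry through F
  have h1 : μ.map (fun ω => (M₁ ω, M₂ ω)) = μ.map (fun ω => (N₁ ω, N₂ ω)) := by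
    have e1 : (fun ω => (M₁ ω, M₂ ω))
        = F ∘ (fun ω => (ξ₁ ω + ξ₂ ω, ξ₁ ω + α (ξ₂ ω))) := by
      funext ω
      simp only [hFdef, Function.comp_apply, hM₁def, hM₂def, map_add, two_smul]
      rw [Prod.mk.injEq]; constructor <;> abel
    have e2 : (fun ω => (N₁ ω, N₂ ω))
        = F ∘ (fun ω => (ξ₁ ω + ξ₂ ω, -(ξ₁ ω + α (ξ₂ ω)))) := by
      funext ω
      simp only [hFdef, Function.comp_apply, hN₁def, hN₂def, map_add]
      rw [Prod.mk.injEq]; constructor <;> abel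
    rw [e1, e2, ← Measure.map_map hFm hL, ← Measure.map_map hFm hL', hsym]
  -- the N's are independent
  have hindN : ProbabilityTheory.IndepFun N₁ N₂ μ :=
    hindep.comp (hαm.sub measurable_id) (measurable_id.sub hαm)
  -- marginals of (M₁, M₂) agree with those of (N₁, N₂)
  have hfst : μ.map M₁ = μ.map N₁ := by
    have := congrArg (Measure.map Prod.fst) h1
    rwa [Measure.map_map measurable_fst (hM₁.prodMk hM₂),
      Measure.map_map measurable_fst (hN₁.prodMk hN₂)] at this
  have hsnd : μ.map M₂ = μ.map N₂ := by
    have := congrArg (Measure.map Prod.snd) h1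
    rwa [Measure.map_map measurable_snd (hM₁.prodMk hM₂),
      Measure.map_map measurable_snd (hN₁.prodMk hN₂)] at this
  rw [ProbabilityTheory.indepFun_iff_map_prod_eq_prod_map_map hM₁.aemeasurable hM₂.aemeasurable]
  rw [h1, hfst, hsnd]
  exact (ProbabilityTheory.indepFun_iff_map_prod_eq_prod_map_map hN₁.aemeasurable
    hN₂.aemeasurable).mp hindN
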